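/- Let f : [0,1] → ℝ satisfy 0 ≤ f(t) ≤ min(1, α/(t·r - α)) for all t where the second bound applies when t·r > α, with constants α > 0, r ∈ (0,1], and 2α/r ≤ 1. Then ∫₀¹ f(t) dt ≤ (α/r)·(2 + log(r/α)). -/

import Mathlib

open MeasureTheory intervalIntegral

/-- If `0 ≤ f t ≤ 1` on `[0,1]` and `f t ≤ α/(t·r - α)` whenever `t·r > α`,
with `α > 0`, `r ∈ (0,1]`, `2α/r ≤ 1`, then
`∫₀¹ f ≤ (α/r)·(2 + log(r/α))`. -/
theorem stmt_19 (α r : ℝ) (hα : 0 < α) (hr0 : 0 < r) (hr1 : r ≤ 1)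
    (hle : 2 * α / r ≤ 1)
    (f : ℝ → ℝ)
    (hf0 : ∀ t ∈ Set.Icc (0:ℝ) 1, 0 ≤ f t)
    (hf1 : ∀ t ∈ Set.Icc (0:ℝ) 1, f t ≤ 1)
    (hfb : ∀ t ∈ Set.Icc (0:ℝ) 1, α < t * r → f t ≤ α / (t * r - α)) :
    ∫ t in (0:ℝ)..1, f t ≤ (α / r) * (2 + Real.log (r / α)) := by
  have h2αr : 2 * α ≤ r := by
    rw [div_le_one hr0] at hle; linarith
  have hαr : 1 ≤ r / α := by
    rw [le_div_iff₀ hα]; linarith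
  have hlog0 : 0 ≤ Real.log (r / α) := Real.log_nonneg hαr
  have hrhs0 : 0 ≤ (α / r) * (2 + Real.log (r / α)) := by positivity
  by_cases hint : IntervalIntegrable f volume 0 1
  · set c := 2 * α / r with hc
    have hc0 : 0 < c := by positivity
    have hc1 : c ≤ 1 := hle
    have hcr : c * r = 2 * α := div_mul_cancel₀ _ (ne_of_gt hr0)
    have hden : ∀ t ∈ Set.Icc c 1, α ≤ t * r - α := by
      intro t ht
      have : c * r ≤ t * r := mul_le_mul_of_nonneg_right ht.1 hr0.le
      rw [hcr] at this; linarith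
    have hsub1 : Set.uIcc (0:ℝ) c ⊆ Set.uIcc (0:ℝ) 1 := by
      rw [Set.uIcc_of_le hc0.le, Set.uIcc_of_le (by norm_num : (0:ℝ) ≤ 1)]
      exact Set.Icc_subset_Icc le_rfl hc1
    have hsub2 : Set.uIcc c (1:ℝ) ⊆ Set.uIcc (0:ℝ) 1 := by
      rw [Set.uIcc_of_le hc1, Set.uIcc_of_le (by norm_num : (0:ℝ) ≤ 1)]
      exact Set.Icc_subset_Icc hc0.le le_rfl
    have hint1 : IntervalIntegrable f volume 0 c := hint.mono_set hsub1
    have hint2 : IntervalIntegrable f volume c 1 := hint.mono_set hsub2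
    have hg_cont : ContinuousOn (fun t => α / (t * r - α)) (Set.Icc c 1) := by
      apply ContinuousOn.div continuousOn_const
      · exact ((continuous_id.mul continuous_const).sub continuous_const).continuousOn
      · intro t ht
        have := hden t ht; intro h; rw [h] at this; linarith
    have hgint : IntervalIntegrable (fun t => α / (t * r - α)) volume c 1 :=
      (hg_cont.intervalIntegrable_of_Icc hc1)
    have hsplit : ∫ t in (0:ℝ)..1, f t = (∫ t in (0:ℝ)..c, f t) + ∫ t in c..(1:ℝ), f t :=
      (integral_add_adjacent_intervals hint1 hint2).symm
    -- bound first part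
    have hI1 : ∫ t in (0:ℝ)..c, f t ≤ c := by
      have : ∫ t in (0:ℝ)..c, f t ≤ ∫ t in (0:ℝ)..c, (1:ℝ) := by
        apply integral_mono_on hc0.le hint1 intervalIntegrable_const
        intro t ht
        exact hf1 t ⟨ht.1, le_trans ht.2 hc1⟩
      simpa using this
    -- bound second part by g
    have hI2 : ∫ t in c..(1:ℝ), f t ≤ ∫ t in c..(1:ℝ), α / (t * r - α) := by
      apply integral_mono_on hc1 hint2 hgint
      intro t ht
      apply hfb t ⟨le_trans hc0.le ht.1, ht.2⟩
      have := hden t ht; linarith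
    -- compute ∫ g
    have hderiv : ∀ t ∈ Set.uIcc c 1, HasDerivAt (fun t => (α / r) * Real.log (t * r - α))
        (α / (t * r - α)) t := by
      intro t ht
      rw [Set.uIcc_of_le hc1] at ht
      have hne : t * r - α ≠ 0 := by
        have := hden t ht; intro h; rw [h] at this; linarith
      have h1 : HasDerivAt (fun t : ℝ => t * r - α) r t := by
        simpa using ((hasDerivAt_id t).mul_const r).sub_const α
      have h2 : HasDerivAt (fun t => Real.log (t * r - α)) ((t * r - α)⁻¹ * r) t := by
        exact (Real.hasDerivAt_log hne).comp t h1
      have h3 := h2.const_mul (α / r)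
      have e : α / (t * r - α) = α / r * ((t * r - α)⁻¹ * r) := by
        field_simp
      rw [e]; exact h3
    have hgval : ∫ t in c..(1:ℝ), α / (t * r - α)
        = (α / r) * Real.log (1 * r - α) - (α / r) * Real.log (c * r - α) :=
      integral_eq_sub_of_hasDerivAt hderiv hgint
    have hlog_le : Real.log (r - α) ≤ Real.log r :=
      Real.log_le_log (by linarith) (by linarith)
    have hlogdiv : Real.log (r / α) = Real.log r - Real.log α :=
      Real.log_div (ne_of_gt hr0) (ne_of_gt hα)
    have hαr0 : 0 < α / r := by positivity
    rw [hsplit]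
    have : (α / r) * Real.log (1 * r - α) - (α / r) * Real.log (c * r - α)
        ≤ (α / r) * Real.log (r / α) := by
      rw [hcr, one_mul, hlogdiv]
      have : (2 : ℝ) * α - α = α := by ring
      rw [this]
      nlinarith [mul_le_mul_of_nonneg_left hlog_le hαr0.le]
    have hcval : c = (α / r) * 2 := by rw [hc]; ring
    rw [hgval] at hI2
    have hexp : (α / r) * (2 + Real.log (r / α))
        = (α / r) * 2 + (α / r) * Real.log (r / α) := by ring
    linarith
  · rw [intervalIntegral.integral_undef hint]
    exact hrhs0
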